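/- Let e, f ∈ ℝ⁴ and let M be the 4×4 matrix with M_{ij} = 1/4 + e_i·f_j, and suppose every entry of M is strictly positive. If e_1 > e_3 and f_1 < f_3, then the matrix M' obtained from M by swapping columns 1 and 3 satisfies ∏_{i=1}^4 (M'_{ii})^4 · ∏_{i≠j} (M'_{ij})^2 > ∏_{i=1}^4 (M_{ii})^4 · ∏_{i≠j} (M_{ij})^2; since M and M' have the same total sum of entries, consequently L(M') > L(M). -/
import Mathlib
set_option maxHeartbeats 1000000


open Finset

/-- The numerator of the likelihood of the 100 Swiss Francs data table:
diagonal counts 4, off-diagonal counts 2. -/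
noncomputable def swissNum (M : Matrix (Fin 4) (Fin 4) ℝ) : ℝ :=
  ∏ i : Fin 4, ∏ j : Fin 4, M i j ^ (if i = j then 4 else 2)

/-- The likelihood of the 100 Swiss Francs data table. -/
noncomputable def swissL (M : Matrix (Fin 4) (Fin 4) ℝ) : ℝ :=
  swissNum M / (∑ i : Fin 4, ∑ j : Fin 4, M i j) ^ 40

theorem column_swap_increases_likelihood
    (e f : Fin 4 → ℝ)
    (M : Matrix (Fin 4) (Fin 4) ℝ)
    (hM : ∀ i j, M i j = 1/4 + e i * f j)
    (hpos : ∀ i j, 0 < M i j)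
    (he : e 0 > e 2) (hf : f 0 < f 2)
    (M' : Matrix (Fin 4) (Fin 4) ℝ)
    (hM' : ∀ i j, M' i j = M i (Equiv.swap (0 : Fin 4) 2 j)) :
    swissNum M' > swissNum M ∧ swissL M' > swissL M := by
  have s0 : (Equiv.swap (0 : Fin 4) 2) 0 = 2 := Equiv.swap_apply_left 0 2
  have s1 : (Equiv.swap (0 : Fin 4) 2) 1 = 1 := by decide
  have s2 : (Equiv.swap (0 : Fin 4) 2) 2 = 0 := Equiv.swap_apply_right 0 2
  have s3 : (Equiv.swap (0 : Fin 4) 2) 3 = 3 := by decide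
  -- key determinant inequality
  have hkey : M 0 0 * M 2 2 < M 0 2 * M 2 0 := by
    rw [hM 0 0, hM 2 2, hM 0 2, hM 2 0]
    nlinarith [mul_pos (sub_pos.2 he) (sub_pos.2 hf)]
  have had : 0 < M 0 0 * M 2 2 := mul_pos (hpos 0 0) (hpos 2 2)
  -- the main algebraic identity
  have hEq : swissNum M' * (M 0 0 * M 2 2) ^ 2 = swissNum M * (M 0 2 * M 2 0) ^ 2 := by
    simp only [swissNum, Fin.prod_univ_four, hM', s0, s1, s2, s3, reduceIte,
      Fin.reduceEq]
    ring
  have hxpos : 0 < swissNum M := by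
    unfold swissNum
    apply Finset.prod_pos
    intro i _
    apply Finset.prod_pos
    intro j _
    exact pow_pos (hpos i j) _
  have hnum : swissNum M' > swissNum M := by
    have h1 : swissNum M * (M 0 0 * M 2 2) ^ 2 < swissNum M * (M 0 2 * M 2 0) ^ 2 := by
      apply mul_lt_mul_of_pos_left _ hxpos
      exact pow_lt_pow_left₀ hkey had.le two_ne_zero
    -- derive
    have h2 : swissNum M * (M 0 0 * M 2 2) ^ 2 < swissNum M' * (M 0 0 * M 2 2) ^ 2 := by
      rw [hEq]; exact h1
    exact lt_of_mul_lt_mul_right h2 (by positivity)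
  refine ⟨hnum, ?_⟩
  have hsum : (∑ i : Fin 4, ∑ j : Fin 4, M' i j) = ∑ i : Fin 4, ∑ j : Fin 4, M i j := by
    simp only [Fin.sum_univ_four, hM', s0, s1, s2, s3]
    ring
  have hS : 0 < ∑ i : Fin 4, ∑ j : Fin 4, M i j :=
    Finset.sum_pos (fun i _ => Finset.sum_pos (fun j _ => hpos i j) ⟨0, mem_univ 0⟩)
      ⟨0, mem_univ 0⟩
  unfold swissL
  rw [hsum]
  exact (div_lt_div_iff_of_pos_right (pow_pos hS 40)).2 hnum
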